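/- In a zero-sum polymatrix game, the linear program minimize Σ_i v_i subject to v_i ≥ r_i(e_{a_i}, π_{-i}) for all i and a_i, and π a product mixed strategy, has optimal value 0; moreover, if (π*, v*) is an ε-optimal feasible solution, then π* is an ε-approximate Nash equilibrium, and r_i(π*) ≤ v_i* ≤ r_i(π*) + ε for every player i. -/

import Mathlib

open Finset

section Helpers

variable {N : Type*} [Fintype N] (A : N → Type*) [∀ i, Fintype (A i)] [∀ i, Nonempty (A i)]

/-- marginal of a mixture over pure profiles -/
lemma mixture_marginal [DecidableEq N] [∀ i, DecidableEq (A i)]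
    (y : (∀ i, A i) → ℝ) (j : N) (g : A j → ℝ) :
    ∑ a : ∀ i, A i, y a * g (a j) = ∑ b, (∑ a : ∀ i, A i, if a j = b then y a else 0) * g b := by
  have h1 : ∀ b : A j, (∑ a : ∀ i, A i, if a j = b then y a else 0) * g b
      = ∑ a : ∀ i, A i, if a j = b then y a * g b else 0 := by
    intro b
    rw [Finset.sum_mul]
    exact Finset.sum_congr rfl fun a _ => by split <;> simp
  simp only [h1]
  rw [Finset.sum_comm]
  refine Finset.sum_congr rfl fun a _ => ?_
  rw [Finset.sum_ite_eq Finset.univ (a j) (fun b => y a * g b)]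
  simp

/-- marginal of a product distribution over pure profiles -/
lemma product_marginal [DecidableEq N] (ρ : ∀ i, A i → ℝ)
    (h1 : ∀ i, ∑ a, ρ i a = 1) (j : N) (g : A j → ℝ) :
    ∑ a : ∀ i, A i, (∏ k, ρ k (a k)) * g (a j) = ∑ b, ρ j b * g b := by
  have hsum : ∀ a : ∀ i, A i, (∏ k, ρ k (a k)) * g (a j)
      = ∏ k, (ρ k (a k) * (if h : k = j then g (h ▸ a k) else 1)) := by
    intro a
    rw [Finset.prod_mul_distrib]
    congr 1
    rw [Finset.prod_eq_single j]
    · rw [dif_pos rfl]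
    · intro k _ hk; rw [dif_neg hk]
    · simp
  simp only [hsum]
  rw [← Fintype.piFinset_univ,
    ← Finset.prod_univ_sum (fun _ => Finset.univ)
      (fun k b => ρ k b * if h : k = j then g (h ▸ b) else 1)]
  rw [Finset.prod_eq_single j]
  · refine Finset.sum_congr rfl fun b _ => ?_
    rw [dif_pos rfl]
  · intro k _ hk
    simp only [dif_neg hk, mul_one]
    exact h1 k
  · simp

end Helpers


/-- Theorem of the alternative (Ville / Farkas style) for matrix games. -/
lemma farkas_alternative' {R C : Type*} [Fintype R] [Fintype C] [Nonempty R] [Nonempty C]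
    (M : R → C → ℝ) :
    (∃ y : C → ℝ, (∀ c, 0 ≤ y c) ∧ (∑ c, y c = 1) ∧ ∀ ρ, ∑ c, M ρ c * y c ≤ 0) ∨
    (∃ x : R → ℝ, (∀ ρ, 0 ≤ x ρ) ∧ (∑ ρ, x ρ = 1) ∧ ∀ c, 0 < ∑ ρ, x ρ * M ρ c) := by
  classical
  set v : C ⊕ R → R → ℝ := Sum.elim (fun c ρ => M ρ c) (fun ρ0 => Pi.single ρ0 1) with hv
  let L : ((C ⊕ R) → ℝ) →ₗ[ℝ] (R → ℝ) :=
    { toFun := fun t => ∑ τ, t τ • v τ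
      map_add' := by
        intro a b; simp [add_smul, Finset.sum_add_distrib]
      map_smul' := by
        intro m a; simp [smul_smul, Finset.smul_sum] }
  set K : Set (R → ℝ) := L '' stdSimplex ℝ (C ⊕ R) with hK
  have hKconv : Convex ℝ K := (convex_stdSimplex ℝ _).linear_image L
  have hKcl : IsClosed K :=
    ((isCompact_stdSimplex ℝ _).image L.continuous_of_finiteDimensional).isClosed
  by_cases h0 : (0 : R → ℝ) ∈ K
  · left
    obtain ⟨t, ⟨ht0, ht1⟩, hLt⟩ := h0
    have hcomp : ∀ ρ, (∑ c, t (Sum.inl c) * M ρ c) + t (Sum.inr ρ) = 0 := by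
      intro ρ
      have h := congrFun hLt ρ
      simp only [L, LinearMap.coe_mk, AddHom.coe_mk, Finset.sum_apply, Pi.smul_apply,
        smul_eq_mul, Fintype.sum_sum_type, hv, Sum.elim_inl, Sum.elim_inr, Pi.zero_apply, Pi.add_apply,
        Pi.single_apply, mul_ite, mul_one, mul_zero, Finset.sum_ite_eq, Finset.mem_univ,
        if_true] at h
      linarith [h]
    set lam := ∑ c, t (Sum.inl c) with hlam
    have hlam0 : 0 ≤ lam := Finset.sum_nonneg fun c _ => ht0 _
    rcases eq_or_lt_of_le hlam0 with heq | hpos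
    · exfalso
      have hz : ∀ c, t (Sum.inl c) = 0 := by
        intro c
        have := (Finset.sum_eq_zero_iff_of_nonneg (fun c _ => ht0 (Sum.inl c))).mp heq.symm
        exact this c (mem_univ c)
      have hz' : ∀ ρ, t (Sum.inr ρ) = 0 := by
        intro ρ
        have := hcomp ρ
        simpa [hz] using this
      have : (1 : ℝ) = 0 := by
        rw [← ht1, Fintype.sum_sum_type]
        simp [hz, hz']
      norm_num at this
    · refine ⟨fun c => t (Sum.inl c) / lam, fun c => div_nonneg (ht0 _) hlam0, ?_, ?_⟩
      · rw [← Finset.sum_div]; field_simp; exact hlam.symm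
      · intro ρ
        have h1 : ∑ c, M ρ c * (t (Sum.inl c) / lam) = (∑ c, t (Sum.inl c) * M ρ c) / lam := by
          rw [Finset.sum_div]
          exact Finset.sum_congr rfl fun c _ => by ring
        rw [h1]
        apply div_nonpos_of_nonpos_of_nonneg _ hlam0
        have := hcomp ρ
        nlinarith [ht0 (Sum.inr ρ)]
  · right
    obtain ⟨f, u, hfa, hu⟩ := geometric_hahn_banach_closed_point hKconv hKcl h0
    have hu0 : u < 0 := by simpa using hu
    have hmem : ∀ τ, v τ ∈ K := by
      intro τ
      refine ⟨Pi.single τ 1, ⟨fun x => by rw [Pi.single_apply]; split <;> norm_num, by simp⟩, ?_⟩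
      simp only [L, LinearMap.coe_mk, AddHom.coe_mk]
      rw [Finset.sum_eq_single τ]
      · simp
      · intro b _ hb; simp [Pi.single_apply, hb]
      · simp
    have hneg : ∀ τ, f (v τ) < 0 := fun τ => (hfa _ (hmem τ)).trans hu0
    set w : R → ℝ := fun ρ => -(f (Pi.single ρ 1)) with hw
    have hwpos : ∀ ρ, 0 < w ρ := by
      intro ρ
      have := hneg (Sum.inr ρ)
      simp only [hv, Sum.elim_inr] at this
      simpa [hw] using this
    have hcol : ∀ c, ∑ ρ, w ρ * M ρ c > 0 := by
      intro c
      have hdec : (fun ρ => M ρ c) = ∑ ρ : R, M ρ c • (Pi.single ρ (1 : ℝ) : R → ℝ) := by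
        funext ρ'
        simp [Finset.sum_apply, Pi.single_apply, mul_ite, Finset.sum_ite_eq]
      have := hneg (Sum.inl c)
      simp only [hv, Sum.elim_inl] at this
      rw [hdec] at this
      rw [map_sum f] at this
      simp only [map_smul, smul_eq_mul] at this
      have h2 : ∑ ρ, M ρ c * f (Pi.single ρ 1) < 0 := this
      have h3 : ∑ ρ, w ρ * M ρ c = -(∑ ρ, M ρ c * f (Pi.single ρ 1)) := by
        rw [← Finset.sum_neg_distrib]
        exact Finset.sum_congr rfl fun ρ _ => by simp [hw]; ring
      rw [h3]; linarith
    set W := ∑ ρ, w ρ with hW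
    have hWpos : 0 < W := Finset.sum_pos (fun ρ _ => hwpos ρ) univ_nonempty
    refine ⟨fun ρ => w ρ / W, fun ρ => div_nonneg (hwpos ρ).le hWpos.le, ?_, ?_⟩
    · rw [← Finset.sum_div]; field_simp; exact hW.symm
    · intro c
      have : ∑ ρ, w ρ / W * M ρ c = (∑ ρ, w ρ * M ρ c) / W := by
        rw [Finset.sum_div]; exact Finset.sum_congr rfl fun ρ _ => by ring
      rw [this]
      exact div_pos (hcol c) hWpos

/-- For a zero-sum polymatrix game, the LP `min ∑ᵢ vᵢ s.t. vᵢ ≥ rᵢ(e_{aᵢ}, π₋ᵢ)` over product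
mixed strategies has optimal value `0`; moreover any ε-optimal feasible `(π*, v*)` yields an
ε-approximate Nash equilibrium `π*` with `rᵢ(π*) ≤ vᵢ* ≤ rᵢ(π*) + ε` for every player. -/
theorem zeroSum_polymatrix_LP {N : Type*} [Fintype N] [Nonempty N]
    (A : N → Type*) [∀ i, Fintype (A i)] [∀ i, Nonempty (A i)]
    (E : N → N → Prop) [DecidableRel E] (hirr : ∀ i, ¬ E i i)
    (r : ∀ i j, A i → A j → ℝ)
    (hzs : ∀ π : ∀ i, A i → ℝ, (∀ i a, 0 ≤ π i a) → (∀ i, ∑ a, π i a = 1) →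
      ∑ i, ∑ j ∈ Finset.univ.filter (fun j => E i j),
        ∑ ai, ∑ aj, π i ai * r i j ai aj * π j aj = 0)
    (ε : ℝ) (hε : 0 ≤ ε) :
    -- (1) the LP has optimal value 0
    IsGLB {t : ℝ | ∃ (π : ∀ i, A i → ℝ) (v : N → ℝ),
        (∀ i a, 0 ≤ π i a) ∧ (∀ i, ∑ a, π i a = 1) ∧
        (∀ i (ai : A i),
          (∑ j ∈ Finset.univ.filter (fun j => E i j), ∑ aj, r i j ai aj * π j aj) ≤ v i) ∧
        t = ∑ i, v i} 0 ∧
    -- (2) any ε-optimal feasible solution gives an ε-approximate NE with payoff estimates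
    (∀ (π : ∀ i, A i → ℝ) (v : N → ℝ),
      (∀ i a, 0 ≤ π i a) → (∀ i, ∑ a, π i a = 1) →
      (∀ i (ai : A i),
        (∑ j ∈ Finset.univ.filter (fun j => E i j), ∑ aj, r i j ai aj * π j aj) ≤ v i) →
      (∑ i, v i ≤ ε) →
      ((∀ i (μ : A i → ℝ), (∀ a, 0 ≤ μ a) → (∑ a, μ a = 1) →
          (∑ ai, μ ai * ∑ j ∈ Finset.univ.filter (fun j => E i j),
              ∑ aj, r i j ai aj * π j aj) -
          (∑ ai, π i ai * ∑ j ∈ Finset.univ.filter (fun j => E i j),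
              ∑ aj, r i j ai aj * π j aj) ≤ ε) ∧
       (∀ i,
          (∑ ai, π i ai * ∑ j ∈ Finset.univ.filter (fun j => E i j),
              ∑ aj, r i j ai aj * π j aj) ≤ v i ∧
          v i ≤ (∑ ai, π i ai * ∑ j ∈ Finset.univ.filter (fun j => E i j),
              ∑ aj, r i j ai aj * π j aj) + ε))) := by
  classical
  -- the expected payoff sums to zero for every product profile
  have hzsum : ∀ (π : ∀ i, A i → ℝ), (∀ i a, 0 ≤ π i a) → (∀ i, ∑ a, π i a = 1) →
      ∑ i, ∑ ai, π i ai *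
        (∑ j ∈ Finset.univ.filter (fun j => E i j), ∑ aj, r i j ai aj * π j aj) = 0 := by
    intro π h0 h1
    rw [← hzs π h0 h1]
    refine Finset.sum_congr rfl fun i _ => ?_
    simp only [Finset.mul_sum]
    rw [Finset.sum_comm]
    exact Finset.sum_congr rfl fun j _ => Finset.sum_congr rfl fun ai _ =>
      Finset.sum_congr rfl fun aj _ => (mul_assoc _ _ _).symm
  -- averaging the feasibility constraints
  have havg : ∀ (π : ∀ i, A i → ℝ) (v : N → ℝ), (∀ i a, 0 ≤ π i a) → (∀ i, ∑ a, π i a = 1) →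
      (∀ i (ai : A i),
        (∑ j ∈ Finset.univ.filter (fun j => E i j), ∑ aj, r i j ai aj * π j aj) ≤ v i) →
      ∀ i, ∑ ai, π i ai *
        (∑ j ∈ Finset.univ.filter (fun j => E i j), ∑ aj, r i j ai aj * π j aj) ≤ v i := by
    intro π v h0 h1 hfeas i
    calc ∑ ai, π i ai *
          (∑ j ∈ Finset.univ.filter (fun j => E i j), ∑ aj, r i j ai aj * π j aj)
        ≤ ∑ ai, π i ai * v i :=
          Finset.sum_le_sum fun ai _ => mul_le_mul_of_nonneg_left (hfeas i ai) (h0 i ai)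
      _ = v i := by rw [← Finset.sum_mul, h1 i, one_mul]
  -- every feasible value is nonnegative
  have hlb : ∀ (π : ∀ i, A i → ℝ) (v : N → ℝ), (∀ i a, 0 ≤ π i a) → (∀ i, ∑ a, π i a = 1) →
      (∀ i (ai : A i),
        (∑ j ∈ Finset.univ.filter (fun j => E i j), ∑ aj, r i j ai aj * π j aj) ≤ v i) →
      0 ≤ ∑ i, v i := by
    intro π v h0 h1 hfeas
    have := Finset.sum_le_sum (fun i (_ : i ∈ Finset.univ) => havg π v h0 h1 hfeas i)
    rw [hzsum π h0 h1] at this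
    exact this
  -- value 0 is attained
  have hmem0 : ∃ (π : ∀ i, A i → ℝ) (v : N → ℝ),
      (∀ i a, 0 ≤ π i a) ∧ (∀ i, ∑ a, π i a = 1) ∧
      (∀ i (ai : A i),
        (∑ j ∈ Finset.univ.filter (fun j => E i j), ∑ aj, r i j ai aj * π j aj) ≤ v i) ∧
      (0 : ℝ) = ∑ i, v i := by
    rcases farkas_alternative'
        (fun (s : ∀ i, A i) (a : ∀ i, A i) =>
          ∑ i, ∑ j ∈ Finset.univ.filter (fun j => E i j), r i j (s i) (a j)) with
      ⟨y, hy0, hy1, hy⟩ | ⟨x, hx0, hx1, hx⟩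
    · -- exact Nash equilibrium exists
      set π : ∀ i, A i → ℝ := fun i b => ∑ a : ∀ i, A i, if a i = b then y a else 0 with hπ
      have hπ0 : ∀ i b, 0 ≤ π i b := fun i b =>
        Finset.sum_nonneg fun a _ => by split <;> simp [hy0]
      have hπ1 : ∀ i, ∑ b, π i b = 1 := by
        intro i
        rw [hπ]
        rw [Finset.sum_comm]
        rw [← hy1]
        refine Finset.sum_congr rfl fun a _ => ?_
        rw [Finset.sum_ite_eq Finset.univ (a i) (fun _ => y a)]
        simp
      have hmarg : ∀ (j : N) (g : A j → ℝ),
          ∑ a : ∀ i, A i, y a * g (a j) = ∑ b, π j b * g b := fun j g =>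
        mixture_marginal A y j g
      -- choose per-player best responses
      have hex : ∀ i, ∃ b : A i, ∀ ai : A i,
          (∑ j ∈ Finset.univ.filter (fun j => E i j), ∑ aj, r i j ai aj * π j aj) ≤
          (∑ j ∈ Finset.univ.filter (fun j => E i j), ∑ aj, r i j b aj * π j aj) := by
        intro i
        exact Finite.exists_max _
      choose σ hσ using hex
      set v : N → ℝ := fun i => ∑ j ∈ Finset.univ.filter (fun j => E i j),
        ∑ aj, r i j (σ i) aj * π j aj with hv
      have hsv : ∑ i, v i ≤ 0 := by
        have h := hy σ
        have heq : ∑ a : ∀ i, A i,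
            (∑ i, ∑ j ∈ Finset.univ.filter (fun j => E i j), r i j (σ i) (a j)) * y a
            = ∑ i, v i := by
          calc ∑ a : ∀ i, A i,
              (∑ i, ∑ j ∈ Finset.univ.filter (fun j => E i j), r i j (σ i) (a j)) * y a
              = ∑ a : ∀ i, A i, ∑ i, ∑ j ∈ Finset.univ.filter (fun j => E i j),
                  y a * r i j (σ i) (a j) := by
                refine Finset.sum_congr rfl fun a _ => ?_
                rw [Finset.sum_mul]
                refine Finset.sum_congr rfl fun i _ => ?_
                rw [Finset.sum_mul]
                exact Finset.sum_congr rfl fun j _ => mul_comm _ _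
            _ = ∑ i, ∑ j ∈ Finset.univ.filter (fun j => E i j), ∑ a : ∀ i, A i,
                  y a * r i j (σ i) (a j) := by
                rw [Finset.sum_comm]
                exact Finset.sum_congr rfl fun i _ => Finset.sum_comm
            _ = ∑ i, ∑ j ∈ Finset.univ.filter (fun j => E i j), ∑ b, π j b * r i j (σ i) b := by
                refine Finset.sum_congr rfl fun i _ => Finset.sum_congr rfl fun j _ => ?_
                exact hmarg j (fun b => r i j (σ i) b)
            _ = ∑ i, v i := by
                rw [hv]
                refine Finset.sum_congr rfl fun i _ => Finset.sum_congr rfl fun j _ =>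
                  Finset.sum_congr rfl fun b _ => mul_comm _ _
        rw [heq] at h
        exact h
      have hge : 0 ≤ ∑ i, v i := hlb π v hπ0 hπ1 hσ
      exact ⟨π, v, hπ0, hπ1, hσ, (le_antisymm hsv hge).symm⟩
    · -- contradiction with the zero-sum property
      exfalso
      set ρ : ∀ i, A i → ℝ := fun i b => ∑ s : ∀ i, A i, if s i = b then x s else 0 with hρ
      have hρ0 : ∀ i b, 0 ≤ ρ i b := fun i b =>
        Finset.sum_nonneg fun s _ => by split <;> simp [hx0]
      have hρ1 : ∀ i, ∑ b, ρ i b = 1 := by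
        intro i
        rw [hρ]
        rw [Finset.sum_comm]
        rw [← hx1]
        refine Finset.sum_congr rfl fun s _ => ?_
        rw [Finset.sum_ite_eq Finset.univ (s i) (fun _ => x s)]
        simp
      have hmargx : ∀ (j : N) (g : A j → ℝ),
          ∑ s : ∀ i, A i, x s * g (s j) = ∑ b, ρ j b * g b := fun j g =>
        mixture_marginal A x j g
      have hpm : ∀ (j : N) (g : A j → ℝ),
          ∑ a : ∀ i, A i, (∏ k, ρ k (a k)) * g (a j) = ∑ b, ρ j b * g b := fun j g =>
        product_marginal A ρ hρ1 j g
      have hw1 : ∑ a : ∀ i, A i, (∏ k, ρ k (a k)) = 1 := by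
        have := hpm (Classical.arbitrary N) (fun _ => 1)
        simpa [hρ1] using this
      have hwnn : ∀ a : ∀ i, A i, 0 ≤ ∏ k, ρ k (a k) := fun a =>
        Finset.prod_nonneg fun k _ => hρ0 k (a k)
      have hex : ∃ a : ∀ i, A i, (∏ k, ρ k (a k)) ≠ 0 := by
        have : (∑ a : ∀ i, A i, ∏ k, ρ k (a k)) ≠ 0 := by rw [hw1]; norm_num
        obtain ⟨a, _, ha⟩ := Finset.exists_ne_zero_of_sum_ne_zero this
        exact ⟨a, ha⟩
      obtain ⟨a0, ha0⟩ := hex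
      have hbig : 0 < ∑ a : ∀ i, A i, (∏ k, ρ k (a k)) *
          ∑ s : ∀ i, A i, x s *
            (∑ i, ∑ j ∈ Finset.univ.filter (fun j => E i j), r i j (s i) (a j)) := by
        refine Finset.sum_pos' (fun a _ => ?_) ⟨a0, Finset.mem_univ a0, ?_⟩
        · refine mul_nonneg (hwnn a) ?_
          refine le_of_lt ?_
          have := hx a
          calc (0:ℝ) < ∑ s : ∀ i, A i, x s *
              (∑ i, ∑ j ∈ Finset.univ.filter (fun j => E i j), r i j (s i) (a j)) := hx a
            _ = _ := rfl
        · exact mul_pos (lt_of_le_of_ne (hwnn a0) (Ne.symm ha0)) (hx a0)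
      have hzero : ∑ a : ∀ i, A i, (∏ k, ρ k (a k)) *
          ∑ s : ∀ i, A i, x s *
            (∑ i, ∑ j ∈ Finset.univ.filter (fun j => E i j), r i j (s i) (a j)) = 0 := by
        calc ∑ a : ∀ i, A i, (∏ k, ρ k (a k)) *
              ∑ s : ∀ i, A i, x s *
                (∑ i, ∑ j ∈ Finset.univ.filter (fun j => E i j), r i j (s i) (a j))
            = ∑ s : ∀ i, A i, x s *
                ∑ a : ∀ i, A i, (∏ k, ρ k (a k)) *
                  (∑ i, ∑ j ∈ Finset.univ.filter (fun j => E i j), r i j (s i) (a j)) := by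
              simp only [Finset.mul_sum]
              rw [Finset.sum_comm]
              exact Finset.sum_congr rfl fun s _ => Finset.sum_congr rfl fun a _ =>
                Finset.sum_congr rfl fun _ _ => Finset.sum_congr rfl fun _ _ => by ring
          _ = ∑ s : ∀ i, A i, x s *
                (∑ i, ∑ j ∈ Finset.univ.filter (fun j => E i j),
                  ∑ aj, ρ j aj * r i j (s i) aj) := by
              refine Finset.sum_congr rfl fun s _ => ?_
              congr 1
              calc ∑ a : ∀ i, A i, (∏ k, ρ k (a k)) *
                    (∑ i, ∑ j ∈ Finset.univ.filter (fun j => E i j), r i j (s i) (a j))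
                  = ∑ a : ∀ i, A i, ∑ i, ∑ j ∈ Finset.univ.filter (fun j => E i j),
                      (∏ k, ρ k (a k)) * r i j (s i) (a j) := by
                    simp only [Finset.mul_sum]
                _ = ∑ i, ∑ j ∈ Finset.univ.filter (fun j => E i j), ∑ a : ∀ i, A i,
                      (∏ k, ρ k (a k)) * r i j (s i) (a j) := by
                    rw [Finset.sum_comm]
                    exact Finset.sum_congr rfl fun i _ => Finset.sum_comm
                _ = ∑ i, ∑ j ∈ Finset.univ.filter (fun j => E i j),
                      ∑ aj, ρ j aj * r i j (s i) aj := by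
                    refine Finset.sum_congr rfl fun i _ => Finset.sum_congr rfl fun j _ => ?_
                    exact hpm j (fun b => r i j (s i) b)
          _ = ∑ i, ∑ j ∈ Finset.univ.filter (fun j => E i j), ∑ ai, ρ i ai *
                ∑ aj, ρ j aj * r i j ai aj := by
              calc ∑ s : ∀ i, A i, x s *
                    (∑ i, ∑ j ∈ Finset.univ.filter (fun j => E i j),
                      ∑ aj, ρ j aj * r i j (s i) aj)
                  = ∑ s : ∀ i, A i, ∑ i, ∑ j ∈ Finset.univ.filter (fun j => E i j),
                      x s * ∑ aj, ρ j aj * r i j (s i) aj := by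
                    refine Finset.sum_congr rfl fun s _ => ?_
                    rw [Finset.mul_sum]
                    exact Finset.sum_congr rfl fun i _ => Finset.mul_sum _ _ _
                _ = ∑ i, ∑ j ∈ Finset.univ.filter (fun j => E i j), ∑ s : ∀ i, A i,
                      x s * ∑ aj, ρ j aj * r i j (s i) aj := by
                    rw [Finset.sum_comm]
                    exact Finset.sum_congr rfl fun i _ => Finset.sum_comm
                _ = _ := by
                    refine Finset.sum_congr rfl fun i _ => Finset.sum_congr rfl fun j _ => ?_
                    exact hmargx i (fun b => ∑ aj, ρ j aj * r i j b aj)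
          _ = ∑ i, ∑ j ∈ Finset.univ.filter (fun j => E i j), ∑ ai, ∑ aj,
                ρ i ai * r i j ai aj * ρ j aj := by
              refine Finset.sum_congr rfl fun i _ => Finset.sum_congr rfl fun j _ =>
                Finset.sum_congr rfl fun ai _ => ?_
              rw [Finset.mul_sum]
              exact Finset.sum_congr rfl fun aj _ => by ring
          _ = 0 := hzs ρ hρ0 hρ1
      linarith
  constructor
  · constructor
    · rintro t ⟨π, v, h0, h1, hfeas, rfl⟩
      exact hlb π v h0 h1 hfeas
    · intro b hb
      exact hb hmem0
  · intro π v h0 h1 hfeas hsum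
    have hui := havg π v h0 h1 hfeas
    have h0sum := hzsum π h0 h1
    have hub : ∀ i, v i ≤ (∑ ai, π i ai *
        ∑ j ∈ Finset.univ.filter (fun j => E i j), ∑ aj, r i j ai aj * π j aj) + ε := by
      intro i
      have hs : (v i - ∑ ai, π i ai *
          ∑ j ∈ Finset.univ.filter (fun j => E i j), ∑ aj, r i j ai aj * π j aj)
          ≤ ∑ k, (v k - ∑ ai, π k ai *
            ∑ j ∈ Finset.univ.filter (fun j => E k j), ∑ aj, r k j ai aj * π j aj) := by
        refine Finset.single_le_sum
          (f := fun k => v k - ∑ ai, π k ai *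
            ∑ j ∈ Finset.univ.filter (fun j => E k j), ∑ aj, r k j ai aj * π j aj)
          (fun k _ => sub_nonneg.2 (hui k)) (Finset.mem_univ i)
      rw [Finset.sum_sub_distrib, h0sum, sub_zero] at hs
      linarith
    refine ⟨?_, fun i => ⟨hui i, hub i⟩⟩
    intro i μ hμ0 hμ1
    have h1' : ∑ ai, μ ai *
        (∑ j ∈ Finset.univ.filter (fun j => E i j), ∑ aj, r i j ai aj * π j aj) ≤ v i := by
      calc ∑ ai, μ ai *
            (∑ j ∈ Finset.univ.filter (fun j => E i j), ∑ aj, r i j ai aj * π j aj)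
          ≤ ∑ ai, μ ai * v i :=
            Finset.sum_le_sum fun ai _ => mul_le_mul_of_nonneg_left (hfeas i ai) (hμ0 ai)
        _ = v i := by rw [← Finset.sum_mul, hμ1, one_mul]
    linarith [hub i]
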